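/- Let p > 2 and let φ : [0,∞) → [p-2,∞) satisfy p(1-1/p)^{p-1}(1+φ(s))^{p-2}(φ(s)-p+2) = s. Then φ(s) ≥ s^{1/(p-1)} for 0 ≤ s ≤ (p-1)^{p-1} and φ(s) < s^{1/(p-1)} for s > (p-1)^{p-1}. -/

import Mathlib

noncomputable def gfun (p u : ℝ) : ℝ :=
  (p-2)*Real.log (1+u) + Real.log (u-p+2) - (p-1)*Real.log u

lemma gderiv (p : ℝ) (hp : 2 < p) (x : ℝ) (hx : p - 2 < x) :
    HasDerivAt (gfun p) ((p-2)*(1/(1+x)) + 1/(x-p+2) - (p-1)*(1/x)) x := by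
  have hx0 : 0 < x := by linarith
  have h1 : HasDerivAt (fun u : ℝ => 1+u) 1 x := by
    simpa using (hasDerivAt_id x).const_add (1:ℝ)
  have h2 : HasDerivAt (fun u : ℝ => u-p+2) 1 x := by
    simpa using ((hasDerivAt_id x).sub_const p).add_const (2:ℝ)
  have l1 := h1.log (by positivity : (1:ℝ)+x ≠ 0)
  have l2 := h2.log (by intro h; nlinarith : x-p+2 ≠ 0)
  have l3 := Real.hasDerivAt_log (ne_of_gt hx0)
  have := ((l1.const_mul (p-2)).add l2).sub (l3.const_mul (p-1))
  rw [one_div x]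
  exact this

lemma gmono (p : ℝ) (hp : 2 < p) : StrictMonoOn (gfun p) (Set.Ioi (p-2)) := by
  apply strictMonoOn_of_deriv_pos (convex_Ioi _)
  · intro x hx
    exact (gderiv p hp x hx).continuousAt.continuousWithinAt
  · intro x hx
    rw [interior_Ioi] at hx
    rw [(gderiv p hp x hx).deriv]
    have hx' : p - 2 < x := hx
    have hx0 : 0 < x := by linarith
    have h1 : (0:ℝ) < 1 + x := by linarith
    have h2 : (0:ℝ) < x - p + 2 := by linarith
    have : (p-2)*(1/(1+x)) + 1/(x-p+2) - (p-1)*(1/x)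
        = (p-1)*(p-2)/(x*(1+x)*(x-p+2)) := by
      field_simp
      try ring
    rw [this]
    have hp2 : (0:ℝ) < p - 2 := by linarith
    have hp1 : (0:ℝ) < p - 1 := by linarith
    positivity

lemma logF (p : ℝ) (hp : 2 < p) (u : ℝ) (hu : p - 2 < u) :
    Real.log (p * (1 - 1/p) ^ (p-1) * (1+u) ^ (p-2) * (u-p+2))
      = Real.log p + (p-1)*(Real.log (p-1) - Real.log p) + (p-2)*Real.log (1+u)
        + Real.log (u-p+2) := by
  have hp0 : (0:ℝ) < p := by linarith
  have hu0 : (0:ℝ) < u := by linarith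
  have h1u : (0:ℝ) < 1 + u := by linarith
  have hB : (0:ℝ) < u - p + 2 := by linarith
  have hq : (0:ℝ) < (p-1)/p := by
    apply div_pos <;> linarith
  have hc : (1:ℝ) - 1/p = (p-1)/p := by field_simp
  rw [hc, Real.log_mul (by positivity) (by positivity),
    Real.log_mul (by positivity) (by positivity),
    Real.log_mul (by positivity) (by positivity),
    Real.log_rpow hq, Real.log_rpow h1u,
    Real.log_div (by linarith) (by linarith)]
  try ring

lemma gval (p : ℝ) (hp : 2 < p) :
    gfun p (p-1) = (p-2)*Real.log p - (p-1)*Real.log (p-1) := by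
  unfold gfun
  have h1 : (1:ℝ) + (p-1) = p := by ring
  have h2 : (p-1) - p + 2 = (1:ℝ) := by ring
  rw [h1, h2, Real.log_one]
  ring

/-- Pointwise inequality A: on [p-2, p-1], F(u) ≤ u^(p-1). -/
lemma keyA (p : ℝ) (hp : 2 < p) (u : ℝ) (hu1 : p - 2 ≤ u) (hu2 : u ≤ p - 1) :
    p * (1 - 1/p) ^ (p-1) * (1+u) ^ (p-2) * (u-p+2) ≤ u ^ (p-1) := by
  rcases eq_or_lt_of_le hu1 with h | h
  · have : u - p + 2 = 0 := by rw [← h]; ring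
    rw [this, mul_zero]
    have : (0:ℝ) < u := by linarith
    positivity
  · have hu0 : (0:ℝ) < u := by linarith
    have hFpos : 0 < p * (1 - 1/p) ^ (p-1) * (1+u) ^ (p-2) * (u-p+2) := by
      have hp0 : (0:ℝ) < p := by linarith
      have h1u : (0:ℝ) < 1 + u := by linarith
      have hB : (0:ℝ) < u - p + 2 := by linarith
      have hc : (0:ℝ) < 1 - 1/p := by
        rw [sub_pos, div_lt_one hp0]; linarith
      positivity
    rw [← Real.log_le_log_iff hFpos (by positivity)]
    rw [logF p hp u h, Real.log_rpow hu0]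
    have hgle : gfun p u ≤ gfun p (p-1) := by
      rcases eq_or_lt_of_le hu2 with h2 | h2
      · rw [h2]
      · exact le_of_lt (gmono p hp h (Set.mem_Ioi.mpr (by linarith)) h2)
    rw [gval p hp] at hgle
    unfold gfun at hgle
    linarith

/-- Pointwise inequality B: for u > p-1, u^(p-1) < F(u). -/
lemma keyB (p : ℝ) (hp : 2 < p) (u : ℝ) (hu : p - 1 < u) :
    u ^ (p-1) < p * (1 - 1/p) ^ (p-1) * (1+u) ^ (p-2) * (u-p+2) := by
  have hu0 : (0:ℝ) < u := by linarith
  have hFpos : 0 < p * (1 - 1/p) ^ (p-1) * (1+u) ^ (p-2) * (u-p+2) := by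
    have hp0 : (0:ℝ) < p := by linarith
    have h1u : (0:ℝ) < 1 + u := by linarith
    have hB : (0:ℝ) < u - p + 2 := by linarith
    have hc : (0:ℝ) < 1 - 1/p := by
      rw [sub_pos, div_lt_one hp0]; linarith
    positivity
  rw [← Real.log_lt_log_iff (by positivity) hFpos, logF p hp u (by linarith),
    Real.log_rpow hu0]
  have hgt : gfun p (p-1) < gfun p u :=
    gmono p hp (Set.mem_Ioi.mpr (by linarith)) (Set.mem_Ioi.mpr (by linarith)) hu
  rw [gval p hp] at hgt
  unfold gfun at hgt
  linarith

theorem stmt_6 (p : ℝ) (hp : 2 < p) (φ : ℝ → ℝ)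
    (hφ0 : ∀ s, 0 ≤ s → p - 2 ≤ φ s)
    (hφ : ∀ s, 0 ≤ s →
      p * (1 - 1 / p) ^ (p - 1) * (1 + φ s) ^ (p - 2) * (φ s - p + 2) = s) :
    (∀ s, 0 ≤ s → s ≤ (p - 1) ^ (p - 1) → s ^ (1 / (p - 1)) ≤ φ s) ∧
    (∀ s, (p - 1) ^ (p - 1) < s → φ s < s ^ (1 / (p - 1))) := by
  have hp1 : (0:ℝ) < p - 1 := by linarith
  constructor
  · intro s hs hsle
    have hu2 := hφ0 s hs
    have hFu := hφ s hs
    have hule : φ s ≤ p - 1 := by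
      by_contra h
      push_neg at h
      have hB := keyB p hp (φ s) h
      rw [hFu] at hB
      have : (p-1) ^ (p-1) < (φ s) ^ (p-1) :=
        Real.rpow_lt_rpow (le_of_lt hp1) h (by linarith)
      linarith
    have hA := keyA p hp (φ s) hu2 hule
    rw [hFu] at hA
    calc s ^ (1/(p-1)) ≤ ((φ s) ^ (p-1)) ^ (1/(p-1)) :=
          Real.rpow_le_rpow hs hA (by positivity)
      _ = φ s := by
          have hu0 : (0:ℝ) < φ s := by linarith
          rw [← Real.rpow_mul (le_of_lt hu0), mul_one_div_cancel (ne_of_gt hp1),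
            Real.rpow_one]
  · intro s hs'
    have hs : 0 ≤ s := le_of_lt (lt_of_le_of_lt (by positivity) hs')
    have hu2 := hφ0 s hs
    have hFu := hφ s hs
    have hgt : p - 1 < φ s := by
      by_contra h
      push_neg at h
      have hA := keyA p hp (φ s) hu2 h
      rw [hFu] at hA
      have : (φ s) ^ (p-1) ≤ (p-1) ^ (p-1) :=
        Real.rpow_le_rpow (by linarith) h (by linarith)
      linarith
    have hB := keyB p hp (φ s) hgt
    rw [hFu] at hB
    have hu0 : (0:ℝ) < φ s := by linarith
    calc φ s = ((φ s) ^ (p-1)) ^ (1/(p-1)) := by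
          rw [← Real.rpow_mul (le_of_lt hu0), mul_one_div_cancel (ne_of_gt hp1),
            Real.rpow_one]
      _ < s ^ (1/(p-1)) := Real.rpow_lt_rpow (by positivity) hB (by positivity)
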